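/- arXiv:1604.07089 — 3 statements merged into one kernel-verified Lean document; each statement's English description precedes it below -/
import Mathlib

section
/- Let p be a prime and w = w_{μ−1}⋯w_0 ∈ W a word of length μ. Then T̄_w(x)·T̄_{w_{LR}}(x) − T̄_{w_L}(x)·T̄_{w_R}(x) = α·x^{μ−1}, where α = p^{μ−2} · (w_{μ−1}/(w_{μ−1}+1)) · ((p−w_0−1)/(w_0+1)) · ∏_{d=2}^{p} d^{−2|w'|_{d−1}}, and w' = w_{μ−2}⋯w_1 is the word obtained from w by removing its leftmost and rightmost letters (|w'|_{d−1} counting occurrences of the single digit d−1 in w'). Equivalently, r_w(x) = 1 + α·x^{μ−1}/(T̄_{w_L}(x)·T̄_{w_R}(x)). -/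
open Finset

/-- `theta p j n` is the number of `t ∈ {0,…,n}` with `ν_p (binom n t) = j`. -/
def theta (p j n : ℕ) : ℕ :=
  ((Finset.range (n + 1)).filter fun t => padicValNat p (n.choose t) = j).card

/-- the base-`p` digit of `n` at position `i`. -/
def digit (p n i : ℕ) : ℕ := n / p ^ i % p

/-- Words over `{0,…,p−1}` are represented as lists, least significant (rightmost) letter
first; `wordCount p w n` is the number of occurrences of `w` as a factor of the base-`p`
expansion of `n` (padded with leading zeros). -/
noncomputable def wordCount (p : ℕ) (w : List ℕ) (n : ℕ) : ℕ :=
  Set.ncard {i : ℕ | ∀ k < w.length, digit p n (i + k) = w.getD k 0}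

/-- membership in the set `W` of admissible words: length ≥ 2, letters `< p`,
leftmost letter (last entry of the list) nonzero, rightmost letter (head) ≠ p−1. -/
def Adm (p : ℕ) (w : List ℕ) : Prop :=
  2 ≤ w.length ∧ (∀ a ∈ w, a < p) ∧ w.getD (w.length - 1) 0 ≠ 0 ∧ w.getD 0 0 ≠ p - 1

/-- membership in `W_j`. -/
def AdmJ (p j : ℕ) (w : List ℕ) : Prop := Adm p w ∧ w.length ≤ j + 1

/-- membership in `W̃`: nonempty words with letters `< p` and nonzero leftmost letter. -/
def Wt (p : ℕ) (w : List ℕ) : Prop :=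
  w ≠ [] ∧ (∀ a ∈ w, a < p) ∧ w.getD (w.length - 1) 0 ≠ 0

/-- The polynomial `T_n(x) = Σ_{t=0}^n x^{ν_p(binom n t)}`. -/
noncomputable def Tpoly (p n : ℕ) : Polynomial ℤ :=
  ∑ t ∈ Finset.range (n + 1), Polynomial.X ^ padicValNat p (n.choose t)

/-- right truncation: remove the rightmost letter. -/
def rightT (w : List ℕ) : List ℕ := w.tail

/-- left truncation: remove the leftmost letter together with the zeros following it. -/
def leftT (w : List ℕ) : List ℕ := ((w.dropLast).reverse.dropWhile (· = 0)).reverse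

/-- the common value `w_{LR} = (w_L)_R = (w_R)_L`. -/
def lrT (w : List ℕ) : List ℕ := leftT w.tail

/-- `T̄_v = T_{(v)_p}/θ_p(0,(v)_p)` as a rational function over `ℚ`. -/
noncomputable def TbarR (p : ℕ) (v : List ℕ) : RatFunc ℚ :=
  algebraMap (Polynomial ℚ) (RatFunc ℚ) ((Tpoly p (Nat.ofDigits p v)).map (Int.castRingHom ℚ)) /
    (theta p 0 (Nat.ofDigits p v) : RatFunc ℚ)

/-- the rational function `r_w`. -/
noncomputable def rFun (p : ℕ) (w : List ℕ) : RatFunc ℚ :=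
  TbarR p w * TbarR p (lrT w) / (TbarR p (rightT w) * TbarR p (leftT w))

/-- `T̄_v` as a power series over `ℚ`. -/
noncomputable def TbarS (p : ℕ) (v : List ℕ) : PowerSeries ℚ :=
  (((Tpoly p (Nat.ofDigits p v)).map (Int.castRingHom ℚ) : Polynomial ℚ) : PowerSeries ℚ) *
    (PowerSeries.C (R := ℚ) (theta p 0 (Nat.ofDigits p v) : ℚ))⁻¹

/-- the power series expansion of `r_w` at `0`. -/
noncomputable def rSer (p : ℕ) (w : List ℕ) : PowerSeries ℚ :=
  TbarS p w * TbarS p (lrT w) * (TbarS p (rightT w) * TbarS p (leftT w))⁻¹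

/-- `T̄_v` as a polynomial over `ℚ`. -/
noncomputable def TbarP (p : ℕ) (v : List ℕ) : Polynomial ℚ :=
  ((theta p 0 (Nat.ofDigits p v) : ℚ))⁻¹ • ((Tpoly p (Nat.ofDigits p v)).map (Int.castRingHom ℚ))

/-- formal logarithm of a power series with constant term 1. -/
noncomputable def logPS {K : Type*} [Field K] (f : PowerSeries K) : PowerSeries K :=
  PowerSeries.mk fun n => ∑ k ∈ Finset.range (n + 1),
    ((-1 : K) ^ (k + 1) / k) * PowerSeries.coeff (R := K) n ((f - 1) ^ k)

/-- formal exponential of a power series with constant term 0. -/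
noncomputable def expPS {K : Type*} [Field K] (f : PowerSeries K) : PowerSeries K :=
  PowerSeries.mk fun n => ∑ k ∈ Finset.range (n + 1),
    ((k.factorial : K))⁻¹ * PowerSeries.coeff (R := K) n (f ^ k)

/-- integer powers of a power series over a field. -/
noncomputable def fpow {K : Type*} [Field K] (f : PowerSeries K) (z : ℤ) : PowerSeries K :=
  if 0 ≤ z then f ^ z.toNat else f⁻¹ ^ (-z).toNat

/-- sum of base-`p` digits. -/
def digitSum (p n : ℕ) : ℕ := (Nat.digits p n).sum

lemma hfacL (p : ℕ) (hp : p.Prime) (m : ℕ) :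
    (p - 1) * padicValNat p (m.factorial) + digitSum p m = m := by
  haveI : Fact p.Prime := ⟨hp⟩
  have h1 := sub_one_mul_padicValNat_factorial (p := p) m
  have h2 := Nat.digit_sum_le p m
  unfold digitSum
  omega

lemma dsum_add (p : ℕ) (hp : p.Prime) (n k : ℕ) (h : k ≤ n) :
    (p - 1) * padicValNat p (n.choose k) + digitSum p n
      = digitSum p k + digitSum p (n - k) := by
  haveI : Fact p.Prime := ⟨hp⟩
  have hmul : padicValNat p n.factorial
      = padicValNat p (n.choose k) + (padicValNat p k.factorial
        + padicValNat p (n - k).factorial) := by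
    have e := Nat.choose_mul_factorial_mul_factorial h
    rw [← e, mul_assoc, padicValNat.mul (Nat.choose_pos h).ne'
        (mul_ne_zero (Nat.factorial_ne_zero _) (Nat.factorial_ne_zero _)),
      padicValNat.mul (Nat.factorial_ne_zero _) (Nat.factorial_ne_zero _)]
  have e1 := hfacL p hp n
  have e2 := hfacL p hp k
  have e3 := hfacL p hp (n - k)
  rw [hmul, Nat.mul_add, Nat.mul_add] at e1
  omega

lemma dsumU (p : ℕ) (hp : p.Prime) (m s : ℕ) (h : s < m) :
    (p - 1) * padicValNat p (m * (m - 1).choose s) + digitSum p m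
      = digitSum p s + digitSum p (m - 1 - s) + 1 := by
  haveI : Fact p.Prime := ⟨hp⟩
  have hm : 0 < m := by omega
  have hmul : padicValNat p (m * (m - 1).choose s)
      = padicValNat p m + padicValNat p ((m - 1).choose s) :=
    padicValNat.mul hm.ne' (Nat.choose_pos (by omega)).ne'
  have hfac : padicValNat p m.factorial
      = padicValNat p m + padicValNat p (m - 1).factorial := by
    rw [← Nat.mul_factorial_pred hm.ne',
      padicValNat.mul hm.ne' (Nat.factorial_ne_zero _)]
  have e1 := hfacL p hp m
  have e2 := hfacL p hp (m - 1)
  have e4 := dsum_add p hp (m - 1) s (by omega)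
  rw [hfac, Nat.mul_add] at e1
  rw [hmul, Nat.mul_add]
  omega

lemma digitSum_cons (p : ℕ) (hp2 : 1 < p) (b m : ℕ) (hb : b < p) :
    digitSum p (b + p * m) = b + digitSum p m := by
  rcases Nat.eq_zero_or_pos (b + p * m) with h | h
  · have hb0 : b = 0 := by omega
    have hm0 : m = 0 := by
      rcases Nat.eq_zero_or_pos m with h' | h'
      · exact h'
      · exfalso; nlinarith
    simp [hb0, hm0, digitSum]
  · unfold digitSum
    rw [Nat.digits_def' hp2 h]
    have h1 : (b + p * m) % p = b := by
      rw [Nat.add_mul_mod_self_left, Nat.mod_eq_of_lt hb]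
    have h2 : (b + p * m) / p = m := by
      rw [Nat.add_mul_div_left _ _ (by omega : 0 < p), Nat.div_eq_of_lt hb, Nat.zero_add]
    rw [h1, h2, List.sum_cons]

section NuLemmas
variable (p : ℕ) (hp : p.Prime)
include hp

lemma nu1 (a b m s : ℕ) (hb : b ≤ a) (ha : a < p) (hs : s ≤ m) :
    padicValNat p ((a + p * m).choose (b + p * s)) = padicValNat p (m.choose s) := by
  have hp2 : 1 < p := hp.two_le
  have e : p * (m - s) + p * s = p * m := by
    rw [← Nat.mul_add]; congr 1; omega
  have hle : b + p * s ≤ a + p * m := by omega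
  have hsub : (a + p * m) - (b + p * s) = (a - b) + p * (m - s) := by omega
  have h1 := dsum_add p hp (a + p * m) (b + p * s) hle
  have h2 := dsum_add p hp m s hs
  rw [hsub, digitSum_cons p hp2 a m ha, digitSum_cons p hp2 b s (by omega),
    digitSum_cons p hp2 (a - b) (m - s) (by omega)] at h1
  have key : (p - 1) * padicValNat p ((a + p * m).choose (b + p * s))
      = (p - 1) * padicValNat p (m.choose s) := by omega
  exact Nat.eq_of_mul_eq_mul_left (by omega) key

lemma nu2 (a b m s : ℕ) (hab : a < b) (hb : b < p) (hs : s < m) :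
    padicValNat p ((a + p * m).choose (b + p * s))
      = padicValNat p (m * (m - 1).choose s) + 1 := by
  have hp2 : 1 < p := hp.two_le
  have e : p * (m - 1 - s) + p * s + p = p * m := by
    rw [← Nat.mul_add, ← Nat.mul_succ]; congr 1; omega
  have hle : b + p * s ≤ a + p * m := by omega
  have hsub : (a + p * m) - (b + p * s) = (p + a - b) + p * (m - 1 - s) := by omega
  have h1 := dsum_add p hp (a + p * m) (b + p * s) hle
  have h2 := dsumU p hp m s hs
  rw [hsub, digitSum_cons p hp2 a m (by omega), digitSum_cons p hp2 b s (by omega),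
    digitSum_cons p hp2 (p + a - b) (m - 1 - s) (by omega)] at h1
  have key : (p - 1) * padicValNat p ((a + p * m).choose (b + p * s))
      = (p - 1) * (padicValNat p (m * (m - 1).choose s) + 1) := by
    rw [Nat.mul_add, Nat.mul_one]; omega
  exact Nat.eq_of_mul_eq_mul_left (by omega) key

lemma nu3 (a b m s : ℕ) (hb : b < a) (ha : a < p) (hs : s ≤ m) :
    padicValNat p ((a + p * m) * ((a + p * m - 1).choose (b + p * s)))
      = padicValNat p (m.choose s) := by
  have hp2 : 1 < p := hp.two_le
  have e : p * (m - s) + p * s = p * m := by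
    rw [← Nat.mul_add]; congr 1; omega
  have hlt : b + p * s < a + p * m := by omega
  have hsub : (a + p * m) - 1 - (b + p * s) = (a - 1 - b) + p * (m - s) := by omega
  have h1 := dsumU p hp (a + p * m) (b + p * s) hlt
  have h2 := dsum_add p hp m s hs
  rw [hsub, digitSum_cons p hp2 a m ha, digitSum_cons p hp2 b s (by omega),
    digitSum_cons p hp2 (a - 1 - b) (m - s) (by omega)] at h1
  have key : (p - 1) * padicValNat p ((a + p * m) * ((a + p * m - 1).choose (b + p * s)))
      = (p - 1) * padicValNat p (m.choose s) := by omega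
  exact Nat.eq_of_mul_eq_mul_left (by omega) key

lemma nu4 (a b m s : ℕ) (hab : a ≤ b) (hb : b < p) (hs : s < m) :
    padicValNat p ((a + p * m) * ((a + p * m - 1).choose (b + p * s)))
      = padicValNat p (m * (m - 1).choose s) + 1 := by
  have hp2 : 1 < p := hp.two_le
  have e : p * (m - 1 - s) + p * s + p = p * m := by
    rw [← Nat.mul_add, ← Nat.mul_succ]; congr 1; omega
  have hlt : b + p * s < a + p * m := by omega
  have hsub : (a + p * m) - 1 - (b + p * s) = (p + a - 1 - b) + p * (m - 1 - s) := by omega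
  have h1 := dsumU p hp (a + p * m) (b + p * s) hlt
  have h2 := dsumU p hp m s hs
  rw [hsub, digitSum_cons p hp2 a m (by omega), digitSum_cons p hp2 b s (by omega),
    digitSum_cons p hp2 (p + a - 1 - b) (m - 1 - s) (by omega)] at h1
  have key : (p - 1) * padicValNat p ((a + p * m) * ((a + p * m - 1).choose (b + p * s)))
      = (p - 1) * (padicValNat p (m * (m - 1).choose s) + 1) := by
    rw [Nat.mul_add, Nat.mul_one]; omega
  exact Nat.eq_of_mul_eq_mul_left (by omega) key

end NuLemmas

noncomputable def Upoly (p n : ℕ) : Polynomial ℤ :=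
  ∑ t ∈ Finset.range n, Polynomial.X ^ padicValNat p (n * (n - 1).choose t)

lemma sum_range_pmul {M : Type*} [AddCommMonoid M] (f : ℕ → M) (p m : ℕ) :
    ∑ t ∈ range (p * m), f t = ∑ s ∈ range m, ∑ b ∈ range p, f (b + p * s) := by
  induction m with
  | zero => simp
  | succ m ih =>
      rw [Nat.mul_succ, Finset.sum_range_add, ih, Finset.sum_range_succ]
      congr 1
      exact Finset.sum_congr rfl fun b _ => by rw [Nat.add_comm]

lemma sum_range_split {M : Type*} [AddCommMonoid M] (g : ℕ → M) {a p : ℕ} (h : a ≤ p) :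
    ∑ b ∈ range p, g b = (∑ b ∈ range a, g b) + ∑ b ∈ Ico a p, g b := by
  rw [Finset.range_eq_Ico, ← Finset.sum_Ico_consecutive g (Nat.zero_le a) h,
    ← Finset.range_eq_Ico]

lemma Trec (p : ℕ) (hp : p.Prime) (a m : ℕ) (ha : a < p) :
    Tpoly p (a + p * m) = (a + 1) • Tpoly p m + (p - 1 - a) • (Polynomial.X * Upoly p m) := by
  have hp2 : 1 < p := hp.two_le
  unfold Tpoly Upoly
  have hN : a + p * m + 1 = p * m + (a + 1) := by omega
  rw [hN, Finset.sum_range_add, sum_range_pmul]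
  have tail : ∑ b ∈ range (a + 1), (Polynomial.X : Polynomial ℤ) ^ padicValNat p ((a + p * m).choose (p * m + b))
      = (a + 1) • Polynomial.X ^ padicValNat p (m.choose m) := by
    rw [Finset.sum_congr rfl (fun b hb => by
      rw [Nat.add_comm (p*m) b, nu1 p hp a b m m (by simpa using Nat.lt_succ_iff.mp (Finset.mem_range.mp hb)) ha le_rfl]),
      Finset.sum_const, Finset.card_range]
  have main : ∀ s ∈ range m,
      ∑ b ∈ range p, (Polynomial.X : Polynomial ℤ) ^ padicValNat p ((a + p * m).choose (b + p * s))
        = (a + 1) • Polynomial.X ^ padicValNat p (m.choose s)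
          + (p - 1 - a) • (Polynomial.X * Polynomial.X ^ padicValNat p (m * (m - 1).choose s)) := by
    intro s hs
    have hsm : s < m := Finset.mem_range.mp hs
    rw [sum_range_split _ (by omega : a + 1 ≤ p)]
    congr 1
    · rw [Finset.sum_congr rfl (fun b hb => by
        rw [nu1 p hp a b m s (by simpa using Nat.lt_succ_iff.mp (Finset.mem_range.mp hb)) ha hsm.le]),
        Finset.sum_const, Finset.card_range]
    · rw [Finset.sum_congr rfl (fun b hb => by
        have hb' := Finset.mem_Ico.mp hb
        rw [nu2 p hp a b m s (by omega) hb'.2 hsm]),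
        Finset.sum_const, Nat.card_Ico]
      have : p - (a + 1) = p - 1 - a := by omega
      rw [this, pow_succ, mul_comm]
  rw [Finset.sum_congr rfl main, tail, Finset.sum_add_distrib, ← Finset.smul_sum, ← Finset.smul_sum,
    Finset.sum_range_succ, Finset.mul_sum, smul_add]
  abel

lemma Urec (p : ℕ) (hp : p.Prime) (a m : ℕ) (ha : a < p) :
    Upoly p (a + p * m) = a • Tpoly p m + (p - a) • (Polynomial.X * Upoly p m) := by
  have hp2 : 1 < p := hp.two_le
  unfold Tpoly Upoly
  rw [Nat.add_comm a (p * m), Finset.sum_range_add, sum_range_pmul]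
  have tail : ∑ b ∈ range a, (Polynomial.X : Polynomial ℤ) ^ padicValNat p ((p * m + a) * ((p * m + a - 1).choose (p * m + b)))
      = a • Polynomial.X ^ padicValNat p (m.choose m) := by
    rw [Finset.sum_congr rfl (fun b hb => by
      rw [Nat.add_comm (p*m) b, Nat.add_comm (p*m) a,
        nu3 p hp a b m m (Finset.mem_range.mp hb) ha le_rfl]),
      Finset.sum_const, Finset.card_range]
  have main : ∀ s ∈ range m,
      ∑ b ∈ range p, (Polynomial.X : Polynomial ℤ) ^ padicValNat p ((p * m + a) * ((p * m + a - 1).choose (b + p * s)))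
        = a • Polynomial.X ^ padicValNat p (m.choose s)
          + (p - a) • (Polynomial.X * Polynomial.X ^ padicValNat p (m * (m - 1).choose s)) := by
    intro s hs
    have hsm : s < m := Finset.mem_range.mp hs
    rw [sum_range_split _ (by omega : a ≤ p)]
    congr 1
    · rw [Finset.sum_congr rfl (fun b hb => by
        rw [Nat.add_comm (p*m) a, nu3 p hp a b m s (Finset.mem_range.mp hb) ha hsm.le]),
        Finset.sum_const, Finset.card_range]
    · rw [Finset.sum_congr rfl (fun b hb => by
        have hb' := Finset.mem_Ico.mp hb
        rw [Nat.add_comm (p*m) a, nu4 p hp a b m s hb'.1 hb'.2 hsm]),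
        Finset.sum_const, Nat.card_Ico, pow_succ, mul_comm]
  rw [Finset.sum_congr rfl main, tail, Finset.sum_add_distrib, ← Finset.smul_sum, ← Finset.smul_sum,
    Finset.sum_range_succ, Finset.mul_sum, smul_add]
  abel

noncomputable def TTU (p : ℕ) : List ℕ → Polynomial ℤ × Polynomial ℤ
  | [] => (1, 0)
  | a :: v =>
      (Polynomial.C ((a : ℤ) + 1) * (TTU p v).1
         + Polynomial.C ((p : ℤ) - 1 - a) * (Polynomial.X * (TTU p v).2),
       Polynomial.C (a : ℤ) * (TTU p v).1
         + Polynomial.C ((p : ℤ) - a) * (Polynomial.X * (TTU p v).2))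

lemma TTU_spec (p : ℕ) (hp : p.Prime) (v : List ℕ) (hv : ∀ a ∈ v, a < p) :
    Tpoly p (Nat.ofDigits p v) = (TTU p v).1
      ∧ Upoly p (Nat.ofDigits p v) = (TTU p v).2 := by
  induction v with
  | nil =>
      constructor
      · simp [Tpoly, TTU]
      · simp [Upoly, TTU]
  | cons a v ih =>
      have ha : a < p := hv a List.mem_cons_self
      obtain ⟨ihT, ihU⟩ := ih (fun x hx => hv x (List.mem_cons_of_mem a hx))
      have hod : Nat.ofDigits p (a :: v) = a + p * (Nat.ofDigits p v) := by
        rw [Nat.ofDigits_cons]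
      have cast1 : ((a + 1 : ℕ) : Polynomial ℤ) = Polynomial.C ((a : ℤ) + 1) := by
        push_cast; simp
      have cast2 : ((p - 1 - a : ℕ) : Polynomial ℤ) = Polynomial.C ((p : ℤ) - 1 - a) := by
        have : ((p - 1 - a : ℕ) : ℤ) = (p : ℤ) - 1 - a := by omega
        rw [← this]; simp
      have cast3 : ((a : ℕ) : Polynomial ℤ) = Polynomial.C ((a : ℤ)) := by simp
      have cast4 : ((p - a : ℕ) : Polynomial ℤ) = Polynomial.C ((p : ℤ) - a) := by
        have : ((p - a : ℕ) : ℤ) = (p : ℤ) - a := by omega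
        rw [← this]; simp
      constructor
      · rw [hod, Trec p hp a _ ha, ihT, ihU, nsmul_eq_mul, nsmul_eq_mul, cast1, cast2]
        rfl
      · rw [hod, Urec p hp a _ ha, ihT, ihU, nsmul_eq_mul, nsmul_eq_mul, cast3, cast4]
        rfl

lemma wronskian (p : ℕ) (c : ℕ) (u : List ℕ) :
    (TTU p u).1 * (TTU p (u ++ [c])).2 - (TTU p (u ++ [c])).1 * (TTU p u).2
      = Polynomial.C (c : ℤ) * (Polynomial.C (p : ℤ) * Polynomial.X) ^ u.length := by
  induction u with
  | nil => simp [TTU]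
  | cons a u ih =>
      show (Polynomial.C ((a : ℤ) + 1) * (TTU p u).1
         + Polynomial.C ((p : ℤ) - 1 - a) * (Polynomial.X * (TTU p u).2)) *
        (Polynomial.C (a : ℤ) * (TTU p (u ++ [c])).1
         + Polynomial.C ((p : ℤ) - a) * (Polynomial.X * (TTU p (u ++ [c])).2))
        - (Polynomial.C ((a : ℤ) + 1) * (TTU p (u ++ [c])).1
         + Polynomial.C ((p : ℤ) - 1 - a) * (Polynomial.X * (TTU p (u ++ [c])).2)) *
        (Polynomial.C (a : ℤ) * (TTU p u).1
         + Polynomial.C ((p : ℤ) - a) * (Polynomial.X * (TTU p u).2)) = _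
      rw [List.length_cons, pow_succ]
      have hC : Polynomial.C ((a : ℤ) + 1) = Polynomial.C (a : ℤ) + 1 := by
        rw [map_add, map_one]
      simp only [map_add, map_sub, map_one]
      linear_combination (Polynomial.C (p : ℤ) * Polynomial.X) * ih

lemma core (p b c : ℕ) (u : List ℕ) :
    (TTU p (b :: (u ++ [c]))).1 * (TTU p u).1
      - (TTU p (b :: u)).1 * (TTU p (u ++ [c])).1
      = Polynomial.C ((c : ℤ) * ((p : ℤ) - 1 - b))
          * (Polynomial.C (p : ℤ) * Polynomial.X) ^ u.length * Polynomial.X := by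
  have W := wronskian p c u
  show (Polynomial.C ((b : ℤ) + 1) * (TTU p (u ++ [c])).1
         + Polynomial.C ((p : ℤ) - 1 - b) * (Polynomial.X * (TTU p (u ++ [c])).2)) * (TTU p u).1
      - (Polynomial.C ((b : ℤ) + 1) * (TTU p u).1
         + Polynomial.C ((p : ℤ) - 1 - b) * (Polynomial.X * (TTU p u).2)) * (TTU p (u ++ [c])).1
      = _
  simp only [map_mul, map_add, map_sub, map_one]
  linear_combination ((Polynomial.C (p : ℤ) - 1 - Polynomial.C (b : ℤ)) * Polynomial.X) * W

lemma coeff0_TTU (p : ℕ) (v : List ℕ) :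
    ((TTU p v).1).coeff 0 = ((v.map (· + 1)).prod : ℕ) := by
  induction v with
  | nil => simp [TTU]
  | cons a v ih =>
      show (Polynomial.C ((a : ℤ) + 1) * (TTU p v).1
         + Polynomial.C ((p : ℤ) - 1 - a) * (Polynomial.X * (TTU p v).2)).coeff 0 = _
      rw [Polynomial.coeff_add, Polynomial.coeff_C_mul, Polynomial.coeff_C_mul,
        Polynomial.mul_coeff_zero, Polynomial.coeff_X_zero, ih]
      rw [List.map_cons, List.prod_cons, Nat.cast_mul, Nat.cast_add, Nat.cast_one]
      ring

lemma theta_coeff (p n : ℕ) : ((theta p 0 n : ℕ) : ℤ) = (Tpoly p n).coeff 0 := by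
  unfold theta Tpoly
  rw [Polynomial.finset_sum_coeff, Finset.card_filter]
  push_cast
  refine Finset.sum_congr rfl fun t _ => ?_
  rw [Polynomial.coeff_X_pow]
  by_cases h : padicValNat p (n.choose t) = 0 <;> simp [h, eq_comm]

lemma theta_prod (p : ℕ) (hp : p.Prime) (v : List ℕ) (hv : ∀ a ∈ v, a < p) :
    theta p 0 (Nat.ofDigits p v) = (v.map (· + 1)).prod := by
  have h := theta_coeff p (Nat.ofDigits p v)
  rw [(TTU_spec p hp v hv).1, coeff0_TTU] at h
  exact_mod_cast h

lemma ofDigits_strip (p : ℕ) (l : List ℕ) :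
    Nat.ofDigits p ((l.reverse.dropWhile (· = 0)).reverse) = Nat.ofDigits p l := by
  have aux : ∀ r : List ℕ,
      Nat.ofDigits p ((r.dropWhile (· = 0)).reverse) = Nat.ofDigits p r.reverse := by
    intro r
    induction r with
    | nil => rfl
    | cons a r ih =>
        by_cases h : a = 0
        · subst h
          rw [List.dropWhile_cons_of_pos (by simp), ih, List.reverse_cons,
            Nat.ofDigits_append]
          simp
        · rw [List.dropWhile_cons_of_neg (by simp [h])]
  rw [aux, List.reverse_reverse]

lemma prod_count (p : ℕ) (u : List ℕ) (hu : ∀ a ∈ u, a < p) :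
    (u.map (· + 1)).prod = ∏ d ∈ Finset.Icc 2 p, d ^ (u.count (d - 1)) := by
  induction u with
  | nil => simp
  | cons a u ih =>
      have ha : a < p := hu a List.mem_cons_self
      rw [List.map_cons, List.prod_cons, ih (fun x hx => hu x (List.mem_cons_of_mem a hx))]
      have hc : ∀ d, (a :: u).count (d - 1) = u.count (d - 1) + if d - 1 = a then 1 else 0 := by
        intro d
        simp only [List.count_cons, beq_iff_eq]
        split_ifs with h1 h2 <;> omega
      simp only [hc, pow_add]
      rw [Finset.prod_mul_distrib]
      have : ∀ d ∈ Finset.Icc 2 p, d ^ (if d - 1 = a then 1 else 0)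
          = if d = a + 1 then d else 1 := by
        intro d hd
        have hd2 : 2 ≤ d := (Finset.mem_Icc.mp hd).1
        have h3 : (d - 1 = a) ↔ (d = a + 1) := by omega
        simp only [h3, pow_boole]
      rw [Finset.prod_congr rfl this]
      simp only [Finset.prod_ite_eq']
      by_cases h0 : a = 0
      · subst h0
        simp
      · have : a + 1 ∈ Finset.Icc 2 p := Finset.mem_Icc.mpr ⟨by omega, by omega⟩
        rw [if_pos this]
        simp [mul_comm]

lemma TbarP_congr (p : ℕ) (v₁ v₂ : List ℕ) (h : Nat.ofDigits p v₁ = Nat.ofDigits p v₂) :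
    TbarP p v₁ = TbarP p v₂ := by unfold TbarP; rw [h]

lemma TbarP_eq (p : ℕ) (hp : p.Prime) (v : List ℕ) (hv : ∀ a ∈ v, a < p) :
    TbarP p v = (((v.map (· + 1)).prod : ℕ) : ℚ)⁻¹ • ((TTU p v).1.map (Int.castRingHom ℚ)) := by
  unfold TbarP
  rw [(TTU_spec p hp v hv).1, theta_prod p hp v hv]

/-- `T̄_w·T̄_{w_{LR}} − T̄_{w_L}·T̄_{w_R} = α·x^{μ−1}` with the explicit
constant `α`.  Here the list `w` has its rightmost letter `w_0` first, so the leftmost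
letter `w_{μ−1}` is `w.getD (w.length−1) 0` and `w' = w_{μ−2}⋯w_1` is `w.tail.dropLast`. -/
theorem stmt7 (p : ℕ) (hp : p.Prime) (w : List ℕ) (hw : Adm p w) :
    TbarP p w * TbarP p (lrT w) - TbarP p (leftT w) * TbarP p (rightT w) =
      Polynomial.C
        ((p : ℚ) ^ (w.length - 2) *
          ((w.getD (w.length - 1) 0 : ℚ) / ((w.getD (w.length - 1) 0 : ℚ) + 1)) *
          (((p : ℚ) - (w.getD 0 0 : ℚ) - 1) / ((w.getD 0 0 : ℚ) + 1)) *
          ∏ d ∈ Finset.Icc 2 p, ((d : ℚ) ^ (2 * (w.tail.dropLast).count (d - 1)))⁻¹) *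
        Polynomial.X ^ (w.length - 1) := by
  obtain ⟨h2, hlt, -, -⟩ := hw
  -- decompose w = b :: (u ++ [c])
  obtain ⟨b, w1, rfl⟩ : ∃ b w1, w = b :: w1 := by
    cases w with
    | nil => simp at h2
    | cons b w1 => exact ⟨b, w1, rfl⟩
  have hw1 : w1 ≠ [] := by
    intro h; rw [h] at h2; simp at h2
  obtain ⟨u, c, rfl⟩ : ∃ u c, w1 = u ++ [c] :=
    ⟨w1.dropLast, w1.getLast hw1, (List.dropLast_append_getLast hw1).symm⟩
  have hb : b < p := hlt b (by simp)
  have hc : c < p := hlt c (by simp)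
  have hu : ∀ a ∈ u, a < p := fun a ha => hlt a (by simp [ha])
  -- structural facts
  have hdrop : (b :: (u ++ [c])).dropLast = b :: u := by
    rw [show b :: (u ++ [c]) = (b :: u) ++ [c] by simp, List.dropLast_concat]
  have hlen : (b :: (u ++ [c])).length = u.length + 2 := by simp
  have hgc : (b :: (u ++ [c])).getD ((b :: (u ++ [c])).length - 1) 0 = c := by
    rw [hlen]
    show (b :: (u ++ [c])).getD (u.length + 1) 0 = c
    rw [List.getD_cons_succ, List.getD_append_right _ _ _ _ le_rfl]
    simp
  have hgb : (b :: (u ++ [c])).getD 0 0 = b := rfl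
  have htd : (b :: (u ++ [c])).tail.dropLast = u := by
    simp [List.dropLast_concat]
  -- rewrite the four TbarPs
  have e1 : TbarP p (leftT (b :: (u ++ [c]))) = TbarP p (b :: u) := by
    refine TbarP_congr p _ _ ?_
    unfold leftT
    rw [ofDigits_strip, hdrop]
  have e2 : TbarP p (lrT (b :: (u ++ [c]))) = TbarP p u := by
    refine TbarP_congr p _ _ ?_
    unfold lrT leftT
    rw [ofDigits_strip]
    show Nat.ofDigits p (u ++ [c]).dropLast = _
    rw [List.dropLast_concat]
  have e3 : rightT (b :: (u ++ [c])) = u ++ [c] := rfl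
  rw [e1, e2, e3, hgc, hgb, htd, hlen]
  rw [TbarP_eq p hp _ hlt, TbarP_eq p hp _ hu, TbarP_eq p hp _ (fun a ha => hlt a (by
        rcases List.mem_cons.mp ha with h | h <;> simp [h])),
      TbarP_eq p hp _ (fun a ha => hlt a (by simp [ha]))]
  -- products of theta values
  set Pu : ℕ := (u.map (· + 1)).prod with hPu
  have hPu0 : (Pu : ℚ) ≠ 0 := by
    have : 0 < Pu := List.prod_pos (by intro x hx; simp at hx; omega)
    positivity
  have hq1 : (((b :: (u ++ [c])).map (· + 1)).prod : ℕ) = (b + 1) * (Pu * (c + 1)) := by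
    simp [hPu]
  have hq2 : (((b :: u).map (· + 1)).prod : ℕ) = (b + 1) * Pu := by simp [hPu]
  have hq3 : (((u ++ [c]).map (· + 1)).prod : ℕ) = Pu * (c + 1) := by simp [hPu]
  rw [hq1, hq2, hq3]
  -- core identity mapped to ℚ
  have hcore := congrArg (Polynomial.map (Int.castRingHom ℚ)) (core p b c u)
  rw [Polynomial.map_sub, Polynomial.map_mul, Polynomial.map_mul, Polynomial.map_mul,
    Polynomial.map_mul, Polynomial.map_pow, Polynomial.map_mul, Polynomial.map_C,
    Polynomial.map_C, Polynomial.map_X] at hcore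
  -- move smuls out and use hcore
  rw [Polynomial.smul_eq_C_mul, Polynomial.smul_eq_C_mul, Polynomial.smul_eq_C_mul,
    Polynomial.smul_eq_C_mul]
  simp only [map_mul, map_sub, map_one, map_natCast] at hcore
  set n := u.length with hn
  set Aw := (TTU p (b :: (u ++ [c]))).1.map (Int.castRingHom ℚ) with hAw
  set Au := (TTU p u).1.map (Int.castRingHom ℚ) with hAu
  set A3 := (TTU p (b :: u)).1.map (Int.castRingHom ℚ) with hA3
  set A4 := (TTU p (u ++ [c])).1.map (Int.castRingHom ℚ) with hA4
  set q : ℚ := (((b : ℚ) + 1) * ((c : ℚ) + 1) * (Pu : ℚ) ^ 2)⁻¹ with hqdef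
  have hb1 : ((b : ℚ) + 1) ≠ 0 := by positivity
  have hc1 : ((c : ℚ) + 1) ≠ 0 := by positivity
  have hx12 : ((((b + 1) * (Pu * (c + 1)) : ℕ) : ℚ))⁻¹ * ((Pu : ℕ) : ℚ)⁻¹ = q := by
    rw [hqdef]; push_cast; rw [← mul_inv]; ring_nf
  have hx34 : ((((b + 1) * Pu : ℕ) : ℚ))⁻¹ * (((Pu * (c + 1) : ℕ) : ℚ))⁻¹ = q := by
    rw [hqdef]; push_cast; rw [← mul_inv]; ring_nf
  have step1 : Polynomial.C ((((b + 1) * (Pu * (c + 1)) : ℕ) : ℚ))⁻¹ * Aw *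
        (Polynomial.C ((Pu : ℕ) : ℚ)⁻¹ * Au)
      - Polynomial.C ((((b + 1) * Pu : ℕ) : ℚ))⁻¹ * A3 *
        (Polynomial.C (((Pu * (c + 1) : ℕ) : ℚ))⁻¹ * A4)
      = Polynomial.C q * (Aw * Au - A3 * A4) := by
    have e12 : Polynomial.C ((((b + 1) * (Pu * (c + 1)) : ℕ) : ℚ))⁻¹ * Polynomial.C ((Pu : ℕ) : ℚ)⁻¹
        = Polynomial.C q := by rw [← map_mul, hx12]
    have e34 : Polynomial.C ((((b + 1) * Pu : ℕ) : ℚ))⁻¹ * Polynomial.C (((Pu * (c + 1) : ℕ) : ℚ))⁻¹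
        = Polynomial.C q := by rw [← map_mul, hx34]
    linear_combination (Aw * Au) * e12 - (A3 * A4) * e34
  rw [step1, hcore]
  have hprodC : ∏ d ∈ Finset.Icc 2 p, ((d : ℚ) ^ (2 * u.count (d - 1)))⁻¹
      = ((Pu : ℚ) ^ 2)⁻¹ := by
    have hPQ : (Pu : ℚ) = ∏ d ∈ Finset.Icc 2 p, (d : ℚ) ^ (u.count (d - 1)) := by
      rw [hPu, prod_count p u hu]; push_cast; rfl
    rw [Finset.prod_inv_distrib]
    congr 1
    rw [hPQ, ← Finset.prod_pow]
    exact Finset.prod_congr rfl fun d _ => by rw [← pow_mul, mul_comm]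
  have hexp1 : n + 2 - 2 = n := by omega
  have hexp2 : n + 2 - 1 = n + 1 := by omega
  rw [hexp1, hexp2, hprodC]
  have hscal : q * ((c : ℚ) * ((p : ℚ) - 1 - (b : ℚ))) * (p : ℚ) ^ n
      = (p : ℚ) ^ n * ((c : ℚ) / ((c : ℚ) + 1)) * (((p : ℚ) - (b : ℚ) - 1) / ((b : ℚ) + 1))
        * ((Pu : ℚ) ^ 2)⁻¹ := by
    rw [hqdef]
    field_simp
    ring
  rw [← hscal]
  rw [mul_pow]
  simp only [map_mul, map_sub, map_one, map_natCast, map_pow]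
  ring
end

section
/- Let p = 2 and n ≥ 0. Then 2·θ_2(1,n) = θ_2(0,n)·|n|_{10}, and 8·θ_2(2,n) = θ_2(0,n)·(−|n|_{10} + |n|_{10}² + 8·|n|_{100} + 2·|n|_{110}), where 10, 100, 110 denote the binary words read with leftmost letter first. -/
open Finset

section Stmt18Aux

def dS (n : ℕ) : ℕ := (Nat.digits 2 n).sum

lemma dS_zero : dS 0 = 0 := by simp [dS]
lemma dS_one : dS 1 = 1 := by simp [dS]

lemma dS_two_mul (m : ℕ) : dS (2 * m) = dS m := by
  rcases Nat.eq_zero_or_pos m with rfl | hm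
  · rfl
  · unfold dS
    rw [Nat.digits_def' (by norm_num : 1 < 2) (by omega)]
    simp [Nat.mul_div_cancel_left _ (by norm_num : 0 < 2), Nat.mul_mod_right]

lemma dS_two_mul_add_one (m : ℕ) : dS (2 * m + 1) = dS m + 1 := by
  unfold dS
  rw [Nat.digits_def' (by norm_num : 1 < 2) (by omega)]
  have h1 : (2 * m + 1) % 2 = 1 := by omega
  have h2 : (2 * m + 1) / 2 = m := by omega
  rw [h1, h2]; simp [add_comm]

lemma dS_add_le : ∀ n a b : ℕ, a + b = n → dS n ≤ dS a + dS b := by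
  intro n
  induction n using Nat.strong_induction_on with
  | _ n ih =>
    intro a b hab
    rcases Nat.eq_zero_or_pos n with rfl | hn
    · obtain ⟨rfl, rfl⟩ : a = 0 ∧ b = 0 := by omega
      simp [dS_zero]
    obtain ⟨a', ha⟩ := Nat.even_or_odd' a
    obtain ⟨b', hb⟩ := Nat.even_or_odd' b
    rcases ha with rfl | rfl <;> rcases hb with rfl | rfl
    · have h : 2 * a' + 2 * b' = 2 * (a' + b') := by ring
      rw [← hab, h, dS_two_mul, dS_two_mul, dS_two_mul]
      exact ih (a' + b') (by omega) a' b' rfl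
    · have h : 2 * a' + (2 * b' + 1) = 2 * (a' + b') + 1 := by ring
      rw [← hab, h, dS_two_mul, dS_two_mul_add_one, dS_two_mul_add_one]
      have := ih (a' + b') (by omega) a' b' rfl
      omega
    · have h : (2 * a' + 1) + 2 * b' = 2 * (a' + b') + 1 := by ring
      rw [← hab, h, dS_two_mul_add_one, dS_two_mul_add_one, dS_two_mul]
      have := ih (a' + b') (by omega) a' b' rfl
      omega
    · have h : (2 * a' + 1) + (2 * b' + 1) = 2 * (a' + b' + 1) := by ring
      rw [← hab, h, dS_two_mul, dS_two_mul_add_one, dS_two_mul_add_one]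
      have h1 := ih (a' + b' + 1) (by omega) (a' + b') 1 rfl
      have h2 := ih (a' + b') (by omega) a' b' rfl
      rw [dS_one] at h1
      omega

lemma dS_le_succ (m : ℕ) : dS (m + 1) ≤ dS m + 1 := by
  have := dS_add_le (m + 1) m 1 rfl
  rw [dS_one] at this; omega

lemma val_choose {n t : ℕ} (h : t ≤ n) (j : ℕ) :
    padicValNat 2 (n.choose t) = j ↔ dS t + dS (n - t) = dS n + j := by
  have hk := sub_one_mul_padicValNat_choose_eq_sub_sum_digits (p := 2) h
  have hle : dS n ≤ dS t + dS (n - t) := by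
    have := dS_add_le n t (n - t) (by omega)
    omega
  unfold dS at *
  omega

def th (j n : ℕ) : ℕ :=
  ((Finset.range (n + 1)).filter fun t => dS t + dS (n - t) = dS n + j).card

def de (j k : ℕ) : ℕ :=
  ((Finset.range (k + 1)).filter fun s => dS s + dS (k - s) + 1 = dS (k + 1) + j).card

lemma sum_range_double (f : ℕ → ℕ) (N : ℕ) :
    ∑ t ∈ range (2 * N), f t = ∑ s ∈ range N, (f (2 * s) + f (2 * s + 1)) := by
  induction N with
  | zero => simp
  | succ k ih =>
    rw [show 2 * (k + 1) = (2 * k + 1) + 1 by ring, sum_range_succ, sum_range_succ, ih,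
      sum_range_succ]
    ring

lemma ite_pair {p q r : Prop} [Decidable p] [Decidable q] [Decidable r]
    (h1 : p ↔ r) (h2 : q ↔ r) :
    (if p then (1:ℕ) else 0) + (if q then 1 else 0) = 2 * (if r then 1 else 0) := by
  split_ifs with hp hq hq <;> tauto

lemma th_zero (j : ℕ) : th j 0 = if j = 0 then 1 else 0 := by
  have h0 : dS 0 = 0 := by simp [dS]
  unfold th
  rw [range_one, filter_singleton]
  by_cases h : j = 0
  · rw [if_pos (by simp [h0, h]), if_pos h, Finset.card_singleton]
  · rw [if_neg (by simp [h0]; omega), if_neg h, Finset.card_empty]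

lemma th_odd (j m : ℕ) : th j (2 * m + 1) = 2 * th j m := by
  unfold th
  rw [card_filter, card_filter, show 2 * m + 1 + 1 = 2 * (m + 1) by ring, sum_range_double,
    Finset.mul_sum]
  apply Finset.sum_congr rfl
  intro s hs
  rw [mem_range] at hs
  rw [show 2 * m + 1 - 2 * s = 2 * (m - s) + 1 by omega,
    show 2 * m + 1 - (2 * s + 1) = 2 * (m - s) by omega,
    dS_two_mul, dS_two_mul_add_one, dS_two_mul_add_one, dS_two_mul_add_one, dS_two_mul]
  exact ite_pair (by omega) (by omega)

lemma th_even_split (j m : ℕ) :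
    th j (2 * m) = ((range (m + 1)).filter fun s => dS s + dS (m - s) = dS m + j).card +
      ((range m).filter fun s => dS s + dS (m - 1 - s) + 2 = dS m + j).card := by
  unfold th
  rw [card_filter, card_filter, card_filter, sum_range_succ, sum_range_double,
    Finset.sum_add_distrib, sum_range_succ]
  have h1 : ∀ s ∈ range m,
      (if dS (2 * s) + dS (2 * m - 2 * s) = dS (2 * m) + j then 1 else 0) =
      (if dS s + dS (m - s) = dS m + j then (1:ℕ) else 0) := by
    intro s hs
    rw [mem_range] at hs
    rw [show 2 * m - 2 * s = 2 * (m - s) by omega]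
    simp only [dS_two_mul]
  have h2 : ∀ s ∈ range m,
      (if dS (2 * s + 1) + dS (2 * m - (2 * s + 1)) = dS (2 * m) + j then 1 else 0) =
      (if dS s + dS (m - 1 - s) + 2 = dS m + j then (1:ℕ) else 0) := by
    intro s hs
    rw [mem_range] at hs
    rw [show 2 * m - (2 * s + 1) = 2 * (m - 1 - s) + 1 by omega]
    simp only [dS_two_mul, dS_two_mul_add_one]
    have : (dS s + 1 + (dS (m - 1 - s) + 1) = dS m + j) ↔ (dS s + dS (m - 1 - s) + 2 = dS m + j) := by
      omega
    exact if_congr this rfl rfl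
  have h3 : (if dS (2 * m) + dS (2 * m - 2 * m) = dS (2 * m) + j then (1:ℕ) else 0) =
      (if dS m + dS (m - m) = dS m + j then (1:ℕ) else 0) := by
    rw [show 2 * m - 2 * m = 2 * (m - m) by omega]
    simp only [dS_two_mul]
  rw [Finset.sum_congr rfl h1, Finset.sum_congr rfl h2, h3]
  ring

lemma th_zero_even (m : ℕ) : th 0 (2 * m) = th 0 m := by
  rw [th_even_split, th]
  have h : ((range m).filter fun s => dS s + dS (m - 1 - s) + 2 = dS m + 0).card = 0 := by
    rw [Finset.card_eq_zero, Finset.filter_eq_empty_iff]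
    intro s hs
    rw [mem_range] at hs
    have h1 := dS_add_le (m - 1) s (m - 1 - s) (by omega)
    have h2 : dS m ≤ dS (m - 1) + 1 := by
      have := dS_le_succ (m - 1); rw [show m - 1 + 1 = m by omega] at this; exact this
    omega
  omega

lemma th_succ_even (j m : ℕ) (hm : 1 ≤ m) :
    th (j + 1) (2 * m) = th (j + 1) m + de j (m - 1) := by
  rw [th_even_split, th, de, show m - 1 + 1 = m by omega]
  congr 1
  congr 1
  apply Finset.filter_congr
  intro s _
  omega

lemma de_even (j l : ℕ) : de j (2 * l) = th j (2 * l) := by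
  unfold de th
  congr 1
  apply Finset.filter_congr
  intro s _
  have h1 : dS (2 * l + 1) = dS (2 * l) + 1 := by
    rw [dS_two_mul_add_one, dS_two_mul]
  omega

lemma de_odd_split (j l : ℕ) :
    de j (2 * l + 1) = 2 * ((range (l + 1)).filter fun r =>
      dS r + dS (l - r) + 2 = dS (l + 1) + j).card := by
  unfold de
  rw [card_filter, card_filter, show 2 * l + 1 + 1 = 2 * (l + 1) by ring, sum_range_double,
    Finset.mul_sum]
  apply Finset.sum_congr rfl
  intro r hr
  rw [mem_range] at hr
  rw [show 2 * l + 1 - 2 * r = 2 * (l - r) + 1 by omega,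
    show 2 * l + 1 - (2 * r + 1) = 2 * (l - r) by omega,
    dS_two_mul]
  simp only [dS_two_mul, dS_two_mul_add_one]
  exact ite_pair (by omega) (by omega)

lemma de_zero_odd (l : ℕ) : de 0 (2 * l + 1) = 0 := by
  rw [de_odd_split]
  rw [Finset.card_eq_zero.2, mul_zero]
  rw [Finset.filter_eq_empty_iff]
  intro r hr
  rw [mem_range] at hr
  have h1 := dS_add_le l r (l - r) (by omega)
  have h2 := dS_le_succ l
  omega

lemma de_succ_odd (j l : ℕ) : de (j + 1) (2 * l + 1) = 2 * de j l := by
  rw [de_odd_split, de]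
  congr 1
  congr 1
  apply Finset.filter_congr
  intro r _
  omega

lemma digit_zero (n : ℕ) : digit 2 n 0 = n % 2 := by simp [digit]

lemma digit_succ (n i : ℕ) : digit 2 n (i + 1) = digit 2 (n / 2) i := by
  unfold digit
  rw [pow_succ']
  rw [Nat.div_div_eq_div_mul]

lemma digit_one (n : ℕ) : digit 2 n 1 = n / 2 % 2 := by
  rw [show (1:ℕ) = 0 + 1 from rfl, digit_succ, digit_zero]

lemma digit_zero_n (i : ℕ) : digit 2 0 i = 0 := by simp [digit]

lemma digit_le_one (n i : ℕ) : digit 2 n i ≤ 1 := by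
  have : n / 2 ^ i % 2 < 2 := Nat.mod_lt _ (by norm_num)
  unfold digit; omega

lemma finite_of_digit_one {n q : ℕ} {S : Set ℕ} (h : ∀ i ∈ S, digit 2 n (i + q) = 1) :
    S.Finite := by
  apply Set.Finite.subset (Set.finite_Iio (n + 1))
  intro i hi
  have h1 := h i hi
  have h2 : n / 2 ^ (i + q) ≠ 0 := by
    intro h0; rw [digit, h0] at h1; simp at h1
  have h3 : 2 ^ (i + q) ≤ n := by
    by_contra hc
    exact h2 (Nat.div_eq_of_lt (by omega))
  have h4 : i + q < 2 ^ (i + q) := Nat.lt_two_pow_self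
  simp only [Set.mem_Iio]
  omega

lemma mem_shift {S : Set ℕ} {i : ℕ} : (i + 1) ∈ (fun x => x + 1) '' S ↔ i ∈ S := by
  constructor
  · rintro ⟨x, hx, hxe⟩
    have hxe' : x + 1 = i + 1 := hxe
    have : x = i := by omega
    rwa [← this]
  · intro h; exact ⟨i, h, rfl⟩

lemma zero_not_mem_shift {S : Set ℕ} : 0 ∉ (fun x => x + 1) '' S := by
  rintro ⟨x, _, hxe⟩
  have hxe' : x + 1 = 0 := hxe
  omega

lemma ncard_shift (S : Set ℕ) : ((fun x => x + 1) '' S).ncard = S.ncard :=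
  Set.ncard_image_of_injective S (fun a b h => by omega)

-- word [0,1]
lemma wc01_eq (n : ℕ) : wordCount 2 [0, 1] n =
    Set.ncard {i : ℕ | digit 2 n i = 0 ∧ digit 2 n (i + 1) = 1} := by
  unfold wordCount
  congr 1
  ext i
  simp only [Set.mem_setOf_eq, List.length_cons, List.length_singleton]
  constructor
  · intro h
    exact ⟨by simpa using h 0 (by norm_num), by simpa using h 1 (by norm_num)⟩
  · rintro ⟨h0, h1⟩ k hk
    have hk2 : k = 0 ∨ k = 1 := by simp at hk; omega
    rcases hk2 with rfl | rfl <;> simpa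

lemma wc001_eq (n : ℕ) : wordCount 2 [0, 0, 1] n =
    Set.ncard {i : ℕ | digit 2 n i = 0 ∧ digit 2 n (i + 1) = 0 ∧ digit 2 n (i + 2) = 1} := by
  unfold wordCount
  congr 1
  ext i
  simp only [Set.mem_setOf_eq, List.length_cons]
  constructor
  · intro h
    exact ⟨by simpa using h 0 (by norm_num), by simpa using h 1 (by norm_num),
      by simpa using h 2 (by norm_num)⟩
  · rintro ⟨h0, h1, h2⟩ k hk
    have hk2 : k = 0 ∨ k = 1 ∨ k = 2 := by simp at hk; omega
    rcases hk2 with rfl | rfl | rfl <;> simpa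

lemma wc011_eq (n : ℕ) : wordCount 2 [0, 1, 1] n =
    Set.ncard {i : ℕ | digit 2 n i = 0 ∧ digit 2 n (i + 1) = 1 ∧ digit 2 n (i + 2) = 1} := by
  unfold wordCount
  congr 1
  ext i
  simp only [Set.mem_setOf_eq, List.length_cons]
  constructor
  · intro h
    exact ⟨by simpa using h 0 (by norm_num), by simpa using h 1 (by norm_num),
      by simpa using h 2 (by norm_num)⟩
  · rintro ⟨h0, h1, h2⟩ k hk
    have hk2 : k = 0 ∨ k = 1 ∨ k = 2 := by simp at hk; omega
    rcases hk2 with rfl | rfl | rfl <;> simpa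

lemma ncard_cond (P Q : ℕ → Prop) (c : Prop) [Decidable c]
    (h0 : P 0 ↔ c) (hs : ∀ i, P (i + 1) ↔ Q i) (hfin : {i | Q i}.Finite) :
    Set.ncard {i | P i} = Set.ncard {i | Q i} + (if c then 1 else 0) := by
  by_cases hc : c
  · have hset : {i | P i} = insert 0 ((fun x => x + 1) '' {i | Q i}) := by
      ext i
      cases i with
      | zero => simp [h0, hc]
      | succ i =>
        simp only [Set.mem_setOf_eq, hs i, Set.mem_insert_iff]
        rw [mem_shift]
        constructor
        · exact fun h => Or.inr h
        · rintro (h | h)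
          · exact absurd h (by omega)
          · exact h
    rw [hset, Set.ncard_insert_of_notMem zero_not_mem_shift (hfin.image _), ncard_shift,
      if_pos hc]
  · have hset : {i | P i} = (fun x => x + 1) '' {i | Q i} := by
      ext i
      cases i with
      | zero =>
        simp only [Set.mem_setOf_eq, h0]
        exact iff_of_false hc zero_not_mem_shift
      | succ i =>
        simp only [Set.mem_setOf_eq, hs i]
        exact (mem_shift).symm
    rw [hset, ncard_shift, if_neg hc, add_zero]

lemma digit_double (m i : ℕ) : digit 2 (2 * m) (i + 1) = digit 2 m i := by
  rw [digit_succ, Nat.mul_div_cancel_left _ (by norm_num : 0 < 2)]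

lemma digit_double_add_one (m i : ℕ) : digit 2 (2 * m + 1) (i + 1) = digit 2 m i := by
  rw [digit_succ, show (2 * m + 1) / 2 = m by omega]

lemma wc01_zero : wordCount 2 [0, 1] 0 = 0 := by
  rw [wc01_eq]
  convert Set.ncard_empty ℕ
  ext i; simp [digit_zero_n]

lemma wc001_zero : wordCount 2 [0, 0, 1] 0 = 0 := by
  rw [wc001_eq]
  convert Set.ncard_empty ℕ
  ext i; simp [digit_zero_n]

lemma wc011_zero : wordCount 2 [0, 1, 1] 0 = 0 := by
  rw [wc011_eq]
  convert Set.ncard_empty ℕ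
  ext i; simp [digit_zero_n]

lemma wc01_fin (m : ℕ) :
    {i | digit 2 m i = 0 ∧ digit 2 m (i + 1) = 1}.Finite :=
  finite_of_digit_one (q := 1) (fun i hi => hi.2)

lemma wc001_fin (m : ℕ) :
    {i | digit 2 m i = 0 ∧ digit 2 m (i + 1) = 0 ∧ digit 2 m (i + 2) = 1}.Finite :=
  finite_of_digit_one (q := 2) (fun i hi => hi.2.2)

lemma wc011_fin (m : ℕ) :
    {i | digit 2 m i = 0 ∧ digit 2 m (i + 1) = 1 ∧ digit 2 m (i + 2) = 1}.Finite :=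
  finite_of_digit_one (q := 2) (fun i hi => hi.2.2)

lemma add_rearr (i : ℕ) : i + 1 + 2 = i + 2 + 1 := rfl

lemma digit_d0 (m : ℕ) : digit 2 (2 * m) 0 = 0 := by rw [digit_zero]; omega
lemma digit_d1 (m : ℕ) : digit 2 (2 * m) 1 = m % 2 := by
  rw [digit_one]; rw [Nat.mul_div_cancel_left _ (by norm_num : 0 < 2)]
lemma digit_d2 (m : ℕ) : digit 2 (2 * m) 2 = m / 2 % 2 := by
  rw [show (2:ℕ) = 1 + 1 from rfl, digit_double, digit_one]
lemma digit_o0 (m : ℕ) : digit 2 (2 * m + 1) 0 = 1 := by rw [digit_zero]; omega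
lemma digit_o1 (m : ℕ) : digit 2 (2 * m + 1) 1 = m % 2 := by
  rw [digit_one, show (2 * m + 1) / 2 = m by omega]
lemma digit_o2 (m : ℕ) : digit 2 (2 * m + 1) 2 = m / 2 % 2 := by
  rw [show (2:ℕ) = 1 + 1 from rfl, digit_double_add_one, digit_one]

lemma wc01_double (m : ℕ) :
    wordCount 2 [0, 1] (2 * m) = wordCount 2 [0, 1] m + (if m % 2 = 1 then 1 else 0) := by
  rw [wc01_eq, wc01_eq]
  have h := ncard_cond (fun i => digit 2 (2 * m) i = 0 ∧ digit 2 (2 * m) (i + 1) = 1)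
    (fun i => digit 2 m i = 0 ∧ digit 2 m (i + 1) = 1) (m % 2 = 1)
    (by simp only [Nat.zero_add, digit_d0, digit_d1, true_and]; try omega)
    (fun i => by simp only [digit_double]; try exact Iff.rfl)
    (wc01_fin m)
  simpa using h

lemma wc01_double_add_one (m : ℕ) : wordCount 2 [0, 1] (2 * m + 1) = wordCount 2 [0, 1] m := by
  rw [wc01_eq, wc01_eq]
  have h := ncard_cond (fun i => digit 2 (2 * m + 1) i = 0 ∧ digit 2 (2 * m + 1) (i + 1) = 1)
    (fun i => digit 2 m i = 0 ∧ digit 2 m (i + 1) = 1) False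
    (by simp [Nat.zero_add, digit_o0])
    (fun i => by simp only [digit_double_add_one]; try exact Iff.rfl)
    (wc01_fin m)
  simpa using h

lemma wc001_double (m : ℕ) :
    wordCount 2 [0, 0, 1] (2 * m) = wordCount 2 [0, 0, 1] m + (if m % 4 = 2 then 1 else 0) := by
  rw [wc001_eq, wc001_eq]
  have h := ncard_cond
    (fun i => digit 2 (2 * m) i = 0 ∧ digit 2 (2 * m) (i + 1) = 0 ∧ digit 2 (2 * m) (i + 2) = 1)
    (fun i => digit 2 m i = 0 ∧ digit 2 m (i + 1) = 0 ∧ digit 2 m (i + 2) = 1) (m % 4 = 2)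
    (by simp only [Nat.zero_add, digit_d0, digit_d1, digit_d2, true_and]; try omega)
    (fun i => by simp only [add_rearr, digit_double]; try exact Iff.rfl)
    (wc001_fin m)
  simpa using h

lemma wc001_double_add_one (m : ℕ) :
    wordCount 2 [0, 0, 1] (2 * m + 1) = wordCount 2 [0, 0, 1] m := by
  rw [wc001_eq, wc001_eq]
  have h := ncard_cond
    (fun i => digit 2 (2 * m + 1) i = 0 ∧ digit 2 (2 * m + 1) (i + 1) = 0 ∧
      digit 2 (2 * m + 1) (i + 2) = 1)
    (fun i => digit 2 m i = 0 ∧ digit 2 m (i + 1) = 0 ∧ digit 2 m (i + 2) = 1) False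
    (by simp [Nat.zero_add, digit_o0])
    (fun i => by simp only [add_rearr, digit_double_add_one]; try exact Iff.rfl)
    (wc001_fin m)
  simpa using h

lemma wc011_double (m : ℕ) :
    wordCount 2 [0, 1, 1] (2 * m) = wordCount 2 [0, 1, 1] m + (if m % 4 = 3 then 1 else 0) := by
  rw [wc011_eq, wc011_eq]
  have h := ncard_cond
    (fun i => digit 2 (2 * m) i = 0 ∧ digit 2 (2 * m) (i + 1) = 1 ∧ digit 2 (2 * m) (i + 2) = 1)
    (fun i => digit 2 m i = 0 ∧ digit 2 m (i + 1) = 1 ∧ digit 2 m (i + 2) = 1) (m % 4 = 3)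
    (by simp only [Nat.zero_add, digit_d0, digit_d1, digit_d2, true_and]; try omega)
    (fun i => by simp only [add_rearr, digit_double]; try exact Iff.rfl)
    (wc011_fin m)
  simpa using h

lemma wc011_double_add_one (m : ℕ) :
    wordCount 2 [0, 1, 1] (2 * m + 1) = wordCount 2 [0, 1, 1] m := by
  rw [wc011_eq, wc011_eq]
  have h := ncard_cond
    (fun i => digit 2 (2 * m + 1) i = 0 ∧ digit 2 (2 * m + 1) (i + 1) = 1 ∧
      digit 2 (2 * m + 1) (i + 2) = 1)
    (fun i => digit 2 m i = 0 ∧ digit 2 m (i + 1) = 1 ∧ digit 2 m (i + 2) = 1) False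
    (by simp [Nat.zero_add, digit_o0])
    (fun i => by simp only [add_rearr, digit_double_add_one]; try exact Iff.rfl)
    (wc011_fin m)
  simpa using h

lemma th_one_even (m : ℕ) (hm : 1 ≤ m) : th 1 (2 * m) = th 1 m + de 0 (m - 1) := by
  simpa using th_succ_even 0 m hm

lemma th_two_even (m : ℕ) (hm : 1 ≤ m) : th 2 (2 * m) = th 2 m + de 1 (m - 1) := by
  simpa using th_succ_even 1 m hm

lemma de_one_odd (l : ℕ) : de 1 (2 * l + 1) = 2 * de 0 l := by
  simpa using de_succ_odd 0 l

lemma key : ∀ n : ℕ,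
    th 0 n = 2 ^ dS n ∧
    2 * th 1 n = 2 ^ dS n * wordCount 2 [0, 1] n ∧
    (8 * th 2 n : ℤ) = (2 : ℤ) ^ dS n *
      (-(wordCount 2 [0, 1] n : ℤ) + (wordCount 2 [0, 1] n : ℤ) ^ 2 +
        8 * (wordCount 2 [0, 0, 1] n : ℤ) + 2 * (wordCount 2 [0, 1, 1] n : ℤ)) := by
  intro n
  induction n using Nat.strong_induction_on with
  | _ n IH =>
  rcases Nat.eq_zero_or_pos n with rfl | hn
  · refine ⟨?_, ?_, ?_⟩ <;>
      simp [th_zero, wc01_zero, wc001_zero, wc011_zero, show dS 0 = 0 by simp [dS]]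
  obtain ⟨m, hm | hm⟩ := Nat.even_or_odd' n
  · -- n = 2 * m, m ≥ 1
    subst hm
    have hm1 : 1 ≤ m := by omega
    obtain ⟨i0, i1, i2⟩ := IH m (by omega)
    rw [th_zero_even, th_one_even m hm1, th_two_even m hm1, dS_two_mul, wc01_double,
      wc001_double, wc011_double]
    obtain ⟨l, hl | hl⟩ := Nat.even_or_odd' m
    · -- m = 2 * l, l ≥ 1 : m - 1 odd
      subst hl
      have hodd : 2 * l - 1 = 2 * (l - 1) + 1 := by omega
      have hde0 : de 0 (2 * l - 1) = 0 := by rw [hodd, de_zero_odd]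
      have hde1 : de 1 (2 * l - 1) = 2 * de 0 (l - 1) := by rw [hodd, de_one_odd]
      refine ⟨i0, ?_, ?_⟩
      · rw [hde0, if_neg (by omega), mul_add, i1]
        ring
      · rw [hde1]
        obtain ⟨r, hr | hr⟩ := Nat.even_or_odd' l
        · -- l = 2r : l - 1 odd, de 0 (l-1) = 0
          subst hr
          have h0 : de 0 (2 * r - 1) = 0 := by
            rw [show 2 * r - 1 = 2 * (r - 1) + 1 by omega, de_zero_odd]
          rw [h0, if_neg (by omega), if_neg (by omega), if_neg (by omega)]
          push_cast
          linear_combination i2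
        · -- l = 2r + 1 : l - 1 = 2r even
          subst hr
          have j0 := (IH (2 * r) (by omega)).1
          have h0 : de 0 (2 * r + 1 - 1) = 2 ^ dS r := by
            rw [show 2 * r + 1 - 1 = 2 * r by omega, de_even, j0, dS_two_mul]
          rw [h0, if_neg (show ¬ 2 * (2 * r + 1) % 2 = 1 by omega),
            if_pos (show 2 * (2 * r + 1) % 4 = 2 by omega),
            if_neg (show ¬ 2 * (2 * r + 1) % 4 = 3 by omega)]
          have hds : dS (2 * (2 * r + 1)) = dS r + 1 := by
            rw [dS_two_mul, dS_two_mul_add_one]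
          rw [hds] at i2 ⊢
          push_cast
          linear_combination i2
    · -- m = 2 * l + 1 : m - 1 = 2l even
      subst hl
      have hm1' : 2 * l + 1 - 1 = 2 * l := by omega
      rw [hm1', de_even, de_even]
      obtain ⟨j0, j1, -⟩ := IH (2 * l) (by omega)
      have hds : dS (2 * l + 1) = dS l + 1 := dS_two_mul_add_one l
      have hds2 : dS (2 * l) = dS l := dS_two_mul l
      refine ⟨i0, ?_, ?_⟩
      · rw [mul_add, i1, j0, if_pos (show (2 * l + 1) % 2 = 1 by omega), hds, hds2]
        ring
      · have hA := wc01_double_add_one l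
        have hB := wc001_double_add_one l
        have hC := wc011_double_add_one l
        rw [hA, hB, hC, hds] at i2
        have j1' := congrArg (fun x : ℕ => (x : ℤ)) j1
        push_cast at j1'
        rw [wc01_double, hds2] at j1'
        rw [hA, hB, hC, hds, if_pos (show (2 * l + 1) % 2 = 1 by omega),
          if_neg (show ¬ (2 * l + 1) % 4 = 2 by omega)]
        by_cases hl2 : l % 2 = 1
        · rw [if_pos (show (2 * l + 1) % 4 = 3 by omega)]
          rw [if_pos hl2] at j1'
          push_cast at j1' ⊢
          linear_combination i2 + 4 * j1'
        · rw [if_neg (show ¬ (2 * l + 1) % 4 = 3 by omega)]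
          rw [if_neg hl2] at j1'
          push_cast at j1' ⊢
          linear_combination i2 + 4 * j1'
  · -- n = 2 * m + 1
    subst hm
    obtain ⟨i0, i1, i2⟩ := IH m (by omega)
    rw [th_odd, th_odd, th_odd, dS_two_mul_add_one, wc01_double_add_one,
      wc001_double_add_one, wc011_double_add_one]
    refine ⟨?_, ?_, ?_⟩
    · rw [i0]; ring
    · rw [i1, pow_succ]; ring
    · push_cast
      linear_combination 2 * i2

lemma theta_eq (j n : ℕ) : theta 2 j n = th j n := by
  unfold theta th
  congr 1
  apply Finset.filter_congr
  intro t ht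
  rw [Finset.mem_range] at ht
  exact val_choose (by omega) j

end Stmt18Aux

/-- for `p = 2`, `2·θ_2(1,n) = θ_2(0,n)·|n|_{10}` and
`8·θ_2(2,n) = θ_2(0,n)·(−|n|_{10} + |n|_{10}² + 8|n|_{100} + 2|n|_{110})`.
(Lists carry the rightmost letter first: `10 = [0,1]`, `100 = [0,0,1]`, `110 = [0,1,1]`.) -/
theorem stmt18 (n : ℕ) :
    2 * theta 2 1 n = theta 2 0 n * wordCount 2 [0, 1] n ∧
    (8 * theta 2 2 n : ℤ) =
      (theta 2 0 n : ℤ) *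
        (-(wordCount 2 [0, 1] n : ℤ) + (wordCount 2 [0, 1] n : ℤ) ^ 2 +
          8 * (wordCount 2 [0, 0, 1] n : ℤ) + 2 * (wordCount 2 [0, 1, 1] n : ℤ)) := by
  have e0 := theta_eq 0 n
  have e1 := theta_eq 1 n
  have e2 := theta_eq 2 n
  obtain ⟨k0, k1, k2⟩ := key n
  constructor
  · rw [e1, e0, k1, k0]
  · rw [e2, e0, k0]
    push_cast
    linear_combination k2
end

section
/- Let p be a prime. Then, as formal power series in z with coefficients in the polynomial ring ℤ[x]: (i) Σ_{n≥0} x^{s_p(n)} z^n = ∏_{i≥0} (1 + x z^{p^i} + x² z^{2p^i} + ⋯ + x^{p−1} z^{(p−1)p^i}); and (ii) (Σ_{n≥0} x^{s_p(n)} z^n)² = Σ_{n≥0} z^n · Σ_{j≥0} θ_p(j,n) x^{s_p(n)+(p−1)j}; equivalently, for every n ≥ 0 one has the polynomial identity Σ_{t=0}^{n} x^{s_p(t)+s_p(n−t)} = Σ_{j≥0} θ_p(j,n)·x^{s_p(n)+(p−1)j}. -/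
open Finset

lemma digitSum_of_lt {p a : ℕ} (hp : 1 < p) (ha : a < p) : digitSum p a = a := by
  rcases Nat.eq_zero_or_pos a with rfl | h
  · simp [digitSum]
  · rw [digitSum, Nat.digits_def' hp h, Nat.mod_eq_of_lt ha, Nat.div_eq_of_lt ha]
    simp

lemma digitSum_add_pow_mul {p : ℕ} (hp : 1 < p) {N r : ℕ} (hr : r < p ^ N) (m : ℕ) :
    digitSum p (r + p ^ N * m) = digitSum p r + digitSum p m := by
  rcases Nat.eq_zero_or_pos m with rfl | hm
  · simp [digitSum]
  have hlen : (Nat.digits p r).length ≤ N := by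
    rcases Nat.eq_zero_or_pos r with rfl | hr0
    · simp
    rw [Nat.digits_len p r hp hr0.ne']
    have := Nat.log_lt_of_lt_pow hr0.ne' hr
    omega
  have key := Nat.digits_append_zeroes_append_digits (b := p)
      (k := N - (Nat.digits p r).length) (m := m) (n := r) hp hm
  rw [Nat.add_sub_cancel' hlen] at key
  have h2 := congrArg List.sum key
  simpa [digitSum, List.sum_append] using h2.symm

lemma kummer_exact {p : ℕ} (hp : p.Prime) {t n : ℕ} (ht : t ≤ n) :
    digitSum p t + digitSum p (n - t) =
      digitSum p n + (p - 1) * padicValNat p (n.choose t) := by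
  haveI : Fact p.Prime := ⟨hp⟩
  have hfac : padicValNat p (n.choose t) + (padicValNat p (Nat.factorial t) +
      padicValNat p (Nat.factorial (n - t))) = padicValNat p (Nat.factorial n) := by
    rw [← padicValNat.mul (Nat.factorial_ne_zero t) (Nat.factorial_ne_zero (n - t)),
      ← padicValNat.mul (Nat.choose_pos ht).ne'
        (Nat.mul_ne_zero (Nat.factorial_ne_zero t) (Nat.factorial_ne_zero (n - t))),
      ← Nat.mul_assoc, Nat.choose_mul_factorial_mul_factorial ht]
  have hmul := congrArg (fun x => (p - 1) * x) hfac
  simp only [Nat.mul_add] at hmul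
  rw [sub_one_mul_padicValNat_factorial t, sub_one_mul_padicValNat_factorial (n - t),
    sub_one_mul_padicValNat_factorial n] at hmul
  have e1 := Nat.digit_sum_le p t
  have e2 := Nat.digit_sum_le p (n - t)
  have e3 := Nat.digit_sum_le p n
  simp only [digitSum]
  set X := (p - 1) * padicValNat p (n.choose t) with hX
  omega

lemma val_choose_le {p : ℕ} (hp : p.Prime) {t n : ℕ} (ht : t ≤ n) :
    padicValNat p (n.choose t) ≤ n := by
  have h := kummer_exact hp ht
  have e1 : digitSum p t ≤ t := Nat.digit_sum_le p t
  have e2 : digitSum p (n - t) ≤ n - t := Nat.digit_sum_le p (n - t)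
  have h2 : (p - 1) * padicValNat p (n.choose t) ≤ n := by
    set X := (p - 1) * padicValNat p (n.choose t) with hX
    omega
  calc padicValNat p (n.choose t)
      ≤ (p - 1) * padicValNat p (n.choose t) :=
        Nat.le_mul_of_pos_left _ (by have := hp.two_le; omega)
    _ ≤ n := h2

lemma part3 {p : ℕ} (hp : p.Prime) (n : ℕ) :
    ∑ t ∈ Finset.range (n + 1),
        (Polynomial.X : Polynomial ℤ) ^ (digitSum p t + digitSum p (n - t)) =
      ∑ j ∈ Finset.range (n + 1),
        (theta p j n : Polynomial ℤ) * Polynomial.X ^ (digitSum p n + (p - 1) * j) := by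
  have maps : ∀ t ∈ Finset.range (n + 1),
      padicValNat p (n.choose t) ∈ Finset.range (n + 1) := by
    intro t ht
    rw [Finset.mem_range] at *
    exact Nat.lt_succ_of_le (val_choose_le hp (Nat.lt_succ_iff.mp ht))
  rw [← Finset.sum_fiberwise_of_maps_to maps
    (fun t => (Polynomial.X : Polynomial ℤ) ^ (digitSum p t + digitSum p (n - t)))]
  refine Finset.sum_congr rfl fun j hj => ?_
  have hcongr : ∀ t ∈ (Finset.range (n + 1)).filter
      (fun t => padicValNat p (n.choose t) = j),
      (Polynomial.X : Polynomial ℤ) ^ (digitSum p t + digitSum p (n - t)) =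
      Polynomial.X ^ (digitSum p n + (p - 1) * j) := by
    intro t ht
    simp only [Finset.mem_filter, Finset.mem_range] at ht
    rw [kummer_exact hp (Nat.lt_succ_iff.mp ht.1), ht.2]
  rw [Finset.sum_congr rfl hcongr, Finset.sum_const, theta, nsmul_eq_mul]

lemma prod_lemma {p : ℕ} (hp : 1 < p) (N : ℕ) :
    (∏ i ∈ Finset.range N, ∑ a ∈ Finset.range p,
        PowerSeries.C (R := Polynomial ℤ) (Polynomial.X ^ a) * PowerSeries.X ^ (a * p ^ i)) =
    ∑ m ∈ Finset.range (p ^ N),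
        PowerSeries.C (R := Polynomial ℤ) (Polynomial.X ^ digitSum p m) * PowerSeries.X ^ m := by
  induction N with
  | zero => simp [digitSum]
  | succ N ih =>
    have decomp : ∀ (F : ℕ → PowerSeries (Polynomial ℤ)),
        ∑ m ∈ Finset.range (p ^ N * p), F m =
        ∑ x ∈ Finset.range (p ^ N) ×ˢ Finset.range p, F (x.1 + p ^ N * x.2) := by
      intro F
      refine Finset.sum_nbij' (fun m => (m % p ^ N, m / p ^ N))
        (fun x => x.1 + p ^ N * x.2) ?_ ?_ ?_ ?_ ?_
      · intro m hm
        rw [Finset.mem_range] at hm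
        simp only [Finset.mem_product, Finset.mem_range]
        exact ⟨Nat.mod_lt _ (pow_pos (by omega : 0 < p) N),
          Nat.div_lt_of_lt_mul (by omega)⟩
      · intro x hx
        simp only [Finset.mem_product, Finset.mem_range] at hx
        rw [Finset.mem_range]
        calc x.1 + p ^ N * x.2 < p ^ N + p ^ N * x.2 := by omega
          _ = p ^ N * (x.2 + 1) := by ring
          _ ≤ p ^ N * p := Nat.mul_le_mul_left _ hx.2
      · intro m hm
        exact Nat.mod_add_div m (p ^ N)
      · intro x hx
        simp only [Finset.mem_product, Finset.mem_range] at hx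
        ext
        · simp [Nat.add_mul_mod_self_left, Nat.mod_eq_of_lt hx.1]
        · show (x.1 + p ^ N * x.2) / p ^ N = x.2
          rw [Nat.add_mul_div_left _ _ (pow_pos (by omega : 0 < p) N),
            Nat.div_eq_of_lt hx.1, Nat.zero_add]
      · intro m hm
        rw [Nat.mod_add_div m (p ^ N)]
    rw [pow_succ, Finset.prod_range_succ, ih, Finset.sum_mul_sum, decomp,
      Finset.sum_product]
    refine Finset.sum_congr rfl fun r hr => Finset.sum_congr rfl fun a ha => ?_
    rw [Finset.mem_range] at hr ha
    rw [digitSum_add_pow_mul hp hr a, digitSum_of_lt hp ha, pow_add, map_mul]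
    ring

/-- the infinite-product and squaring identities for the generating
function `Σ_n x^{s_p(n)} z^n` (a power series in `z` over `ℤ[x]`); the `n`-th
coefficient of the infinite product `∏_{i≥0}(1 + xz^{p^i} + ⋯ + x^{p−1}z^{(p−1)p^i})`
equals that of the partial product over `i ≤ n`, since the omitted factors are
`1 + (terms of order > n)`. -/
theorem stmt19 (p : ℕ) (hp : p.Prime) :
    (∀ n : ℕ,
      PowerSeries.coeff (R := Polynomial ℤ) n
          (PowerSeries.mk fun m => (Polynomial.X : Polynomial ℤ) ^ digitSum p m) =
        PowerSeries.coeff (R := Polynomial ℤ) n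
          (∏ i ∈ Finset.range (n + 1),
            ∑ a ∈ Finset.range p,
              PowerSeries.C (R := Polynomial ℤ) (Polynomial.X ^ a) *
                PowerSeries.X ^ (a * p ^ i))) ∧
    (PowerSeries.mk fun m => (Polynomial.X : Polynomial ℤ) ^ digitSum p m) ^ 2 =
      PowerSeries.mk (fun n => ∑ j ∈ Finset.range (n + 1),
        (theta p j n : Polynomial ℤ) * Polynomial.X ^ (digitSum p n + (p - 1) * j)) ∧
    ∀ n : ℕ,
      ∑ t ∈ Finset.range (n + 1),
          (Polynomial.X : Polynomial ℤ) ^ (digitSum p t + digitSum p (n - t)) =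
        ∑ j ∈ Finset.range (n + 1),
          (theta p j n : Polynomial ℤ) * Polynomial.X ^ (digitSum p n + (p - 1) * j) := by
  
  have hp1 : 1 < p := hp.one_lt
  refine ⟨fun n => ?_, ?_, fun n => part3 hp n⟩
  · rw [PowerSeries.coeff_mk, prod_lemma hp1 (n + 1), map_sum]
    have hn : n < p ^ (n + 1) :=
      lt_of_lt_of_le (Nat.lt_two_pow_self (n := n))
        (le_trans (Nat.pow_le_pow_right (by omega) (Nat.le_succ n))
          (Nat.pow_le_pow_left hp.two_le (n + 1)))
    rw [Finset.sum_congr rfl fun m hm =>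
      (by rw [PowerSeries.coeff_C_mul, PowerSeries.coeff_X_pow] :
        (PowerSeries.coeff (R := Polynomial ℤ) n)
            (PowerSeries.C (R := Polynomial ℤ) (Polynomial.X ^ digitSum p m) *
              PowerSeries.X ^ m) =
          Polynomial.X ^ digitSum p m * (if n = m then 1 else 0))]
    simp [Finset.sum_ite_eq, Finset.mem_range, hn]
  · refine PowerSeries.ext fun n => ?_
    rw [sq, PowerSeries.coeff_mul, PowerSeries.coeff_mk]
    simp only [PowerSeries.coeff_mk]
    rw [Finset.Nat.sum_antidiagonal_eq_sum_range_succ_mk]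
    simp only [← pow_add]
    exact part3 hp n
end
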